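/- Let X be a smooth cubic surface over a field k and K/k a finite separable extension. The norm map Pic(X_K) → Pic(X) sends Δ(X_K) into Δ(X), and the restriction map Pic(X) → Pic(X_K) sends Δ(X) into Δ(X_K); the composite Norm_{K/k} ∘ Res_{k,K} on Pic(X)/Δ(X) is multiplication by [K:k]. -/

import Mathlib

/-!
Model: the Picard group of a smooth cubic surface over a separably closed
field is identified with `ℤ⁷ = Fin 7 → ℤ` with its standard basis
`λ₀, L₁, …, L₆` (pullback of a line and the six exceptional classes),
intersection form `picInter`, canonical class `KX = -3λ₀ + L₁ + ⋯ + L₆`.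
The classes of the 27 lines are exactly the classes `l` with
`l·l = -1` and `KX·l = -1`.
-/

def picInter (a b : Fin 7 → ℤ) : ℤ := a 0 * b 0 - ∑ i : Fin 6, a i.succ * b i.succ

def KX : Fin 7 → ℤ := ![-3, 1, 1, 1, 1, 1, 1]

def IsLineClass (l : Fin 7 → ℤ) : Prop := picInter l l = -1 ∧ picInter KX l = -1

/-!
Galois model: for a smooth cubic surface `X` over a field `k`, split by a
finite Galois extension with group `G`, the Galois action on the geometric
Picard group is a homomorphism `ρ : G →* Multiplicative (AddAut (Fin 7 → ℤ))` preserving the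
intersection form, the canonical class and the set of line classes.
`Pic(X)` is identified with the fixed subgroup `fixedSubgroup ρ`, and the
subgroup `Δ ⊆ Pic(X)` generated by norms (from finite separable extensions)
of lines is `Delta ρ`: the subgroup generated by the Galois-orbit sums
(= norms from the field of definition) of the 27 line classes.
-/

variable {G : Type*} [Group G] [Fintype G]

noncomputable def normOrbit (ρ : G →* Multiplicative (AddAut (Fin 7 → ℤ))) (l : Fin 7 → ℤ) : Fin 7 → ℤ :=
  ∑ m ∈ Finset.image (fun g => ρ g l) Finset.univ, m

noncomputable def Delta (ρ : G →* Multiplicative (AddAut (Fin 7 → ℤ))) : AddSubgroup (Fin 7 → ℤ) :=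
  AddSubgroup.closure { x | ∃ l, IsLineClass l ∧ x = normOrbit ρ l }

def fixedSubgroup (ρ : G →* Multiplicative (AddAut (Fin 7 → ℤ))) : AddSubgroup (Fin 7 → ℤ) where
  carrier := {x | ∀ g, ρ g x = x}
  zero_mem' := fun g => map_zero (Multiplicative.toAdd (ρ g))
  add_mem' := fun {a b} ha hb g => by rw [map_add, ha g, hb g]
  neg_mem' := fun {a} ha g => by rw [map_neg, ha g]

open Finset

lemma rho_mul (ρ : G →* Multiplicative (AddAut (Fin 7 → ℤ))) (a b : G) (x : Fin 7 → ℤ) :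
    ρ (a * b) x = ρ a (ρ b x) := by rw [map_mul]; rfl

lemma fiber_card (ρ : G →* Multiplicative (AddAut (Fin 7 → ℤ))) (l : Fin 7 → ℤ) (g₀ : G) :
    (univ.filter fun g : G => ρ g l = ρ g₀ l).card
      = (univ.filter fun g : G => ρ g l = l).card := by
  classical
  apply Finset.card_nbij' (fun g => g₀⁻¹ * g) (fun g => g₀ * g)
  · intro g hg
    simp only [coe_filter, Set.mem_setOf_eq, mem_filter, mem_univ, true_and] at *
    rw [rho_mul, hg, ← rho_mul, inv_mul_cancel, map_one]; rfl
  · intro g hg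
    simp only [coe_filter, Set.mem_setOf_eq, mem_filter, mem_univ, true_and] at *
    rw [rho_mul, hg]
  · intro g _; group
  · intro g _; group

lemma sum_all_eq (ρ : G →* Multiplicative (AddAut (Fin 7 → ℤ))) (l : Fin 7 → ℤ) :
    ∑ g : G, ρ g l = (univ.filter fun g : G => ρ g l = l).card • normOrbit ρ l := by
  classical
  rw [← Finset.sum_fiberwise_of_maps_to (g := fun g : G => ρ g l)
      (t := Finset.image (fun g => ρ g l) Finset.univ)
      (fun g _ => Finset.mem_image_of_mem _ (mem_univ g)) (fun g => ρ g l)]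
  rw [normOrbit, Finset.smul_sum]
  refine Finset.sum_congr rfl ?_
  intro m hm
  obtain ⟨g₀, -, rfl⟩ := Finset.mem_image.mp hm
  rw [Finset.sum_congr rfl (fun g hg => (Finset.mem_filter.mp hg).2), Finset.sum_const,
    fiber_card]

/-- the stabilizer of `l` as a subgroup -/
def stab (ρ : G →* Multiplicative (AddAut (Fin 7 → ℤ))) (l : Fin 7 → ℤ) : Subgroup G where
  carrier := {g | ρ g l = l}
  one_mem' := by simp only [Set.mem_setOf_eq, map_one]; rfl
  mul_mem' := fun {a b} ha hb => by
    simp only [Set.mem_setOf_eq] at *; rw [rho_mul, hb, ha]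
  inv_mem' := fun {a} ha => by
    simp only [Set.mem_setOf_eq] at *
    conv_lhs => rw [← ha, ← rho_mul, inv_mul_cancel, map_one]
    rfl

lemma stab_card_eq (ρ : G →* Multiplicative (AddAut (Fin 7 → ℤ))) (l : Fin 7 → ℤ) :
    (univ.filter fun g : G => ρ g l = l).card = Nat.card (stab ρ l) := by
  classical
  rw [Nat.card_eq_fintype_card, Fintype.card_subtype]
  congr 1
  ext g
  simp [stab, Subgroup.mem_mk]

/-- an `H`-invariant finset of line classes has its sum in `Delta`. -/
lemma sum_invariant_mem (ρ : G →* Multiplicative (AddAut (Fin 7 → ℤ))) (T : Finset (Fin 7 → ℤ))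
    (hT1 : ∀ m ∈ T, IsLineClass m) (hT2 : ∀ (g : G), ∀ m ∈ T, ρ g m ∈ T) :
    ∑ m ∈ T, m ∈ Delta ρ := by
  classical
  induction T using Finset.strongInduction with
  | _ T ih =>
    rcases T.eq_empty_or_nonempty with rfl | ⟨m, hm⟩
    · simpa using (Delta ρ).zero_mem
    · set S : Finset (Fin 7 → ℤ) := Finset.image (fun g : G => ρ g m) univ with hSdef
      have hSsub : S ⊆ T := by
        intro x hx
        obtain ⟨g, -, rfl⟩ := Finset.mem_image.mp hx
        exact hT2 g m hm
      have hmS : m ∈ S := by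
        refine Finset.mem_image.mpr ⟨1, mem_univ 1, ?_⟩
        rw [map_one]; rfl
      have hsplit : ∑ x ∈ T, x = (∑ x ∈ T \ S, x) + ∑ x ∈ S, x :=
        (Finset.sum_sdiff hSsub).symm
      have h1 : ∑ x ∈ S, x ∈ Delta ρ :=
        AddSubgroup.subset_closure ⟨m, hT1 m hm, rfl⟩
      have hss : T \ S ⊂ T := Finset.sdiff_ssubset hSsub ⟨m, hmS⟩
      have hSS : ∀ (g : G), ∀ x ∈ S, ρ g x ∈ S := by
        intro g x hx
        obtain ⟨g', -, rfl⟩ := Finset.mem_image.mp hx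
        exact Finset.mem_image.mpr ⟨g * g', mem_univ _, rho_mul ρ g g' m⟩
      have h2 : ∑ x ∈ T \ S, x ∈ Delta ρ := by
        refine ih (T \ S) hss (fun x hx => hT1 x (Finset.mem_sdiff.mp hx).1) ?_
        intro g x hx
        obtain ⟨hxT, hxS⟩ := Finset.mem_sdiff.mp hx
        refine Finset.mem_sdiff.mpr ⟨hT2 g x hxT, fun hc => hxS ?_⟩
        have h3 : ρ g⁻¹ (ρ g x) ∈ S := hSS g⁻¹ _ hc
        rwa [← rho_mul, inv_mul_cancel, map_one] at h3
      rw [hsplit]; exact (Delta ρ).add_mem h2 h1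

lemma cancel_nsmul (k : ℕ) (a b : Fin 7 → ℤ) (hk : k ≠ 0) (h : k • a = k • b) : a = b := by
  have h2 : (k : ℤ) • a = (k : ℤ) • b := by rwa [natCast_zsmul, natCast_zsmul]
  exact smul_right_injective (Fin 7 → ℤ) (by exact_mod_cast hk) h2

/-- Norm and restriction for a finite separable extension `K/k`,
corresponding to a subgroup `H ≤ G` (so `[K:k] = [G:H] = H.index`), with a
choice `R` of coset representatives.  (a) The norm
`x ↦ ∑_{c ∈ G/H} (R c)·x` maps `Δ(X_K)` into `Δ(X)`; (b) restriction maps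
`Δ(X)` into `Δ(X_K)`; (c) on Galois-fixed classes the composite
`Norm ∘ Res` is multiplication by `[K:k]`, hence so on `Pic(X)/Δ(X)`. -/
theorem stmt10
    (ρ : G →* Multiplicative (AddAut (Fin 7 → ℤ)))
    (hlines : ∀ (g : G) (l : Fin 7 → ℤ), IsLineClass l → IsLineClass (ρ g l))
    (hint : ∀ (g : G) (a b : Fin 7 → ℤ), picInter (ρ g a) (ρ g b) = picInter a b)
    (hK : ∀ g : G, ρ g KX = KX)
    (H : Subgroup G) [Fintype H] [Fintype (G ⧸ H)]
    (R : G ⧸ H → G) (hR : ∀ c : G ⧸ H, QuotientGroup.mk (R c) = c) :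
    (∀ x ∈ Delta (ρ.comp H.subtype), (∀ h : H, ρ h x = x) →
        (∑ c : G ⧸ H, ρ (R c) x) ∈ Delta ρ) ∧
      (∀ x ∈ Delta ρ, x ∈ Delta (ρ.comp H.subtype)) ∧
      ∀ x ∈ fixedSubgroup ρ, (∑ c : G ⧸ H, ρ (R c) x) = H.index • x := by
  classical
  set ρH := ρ.comp H.subtype with hρH
  -- the bijection (G ⧸ H) × H ≃ G
  have hbij : Function.Bijective (fun p : (G ⧸ H) × H => R p.1 * (p.2 : G)) := by
    constructor
    · rintro ⟨c, h⟩ ⟨c', h'⟩ he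
      simp only at he
      have hc : c = c' := by
        have := congrArg (QuotientGroup.mk (s := H)) he
        rwa [QuotientGroup.mk_mul_of_mem _ h.2, QuotientGroup.mk_mul_of_mem _ h'.2,
          hR, hR] at this
      subst hc
      have : (h : G) = (h' : G) := mul_left_cancel he
      exact Prod.ext rfl (Subtype.ext this)
    · intro g
      have hmem : (R (QuotientGroup.mk g))⁻¹ * g ∈ H := by
        rw [← QuotientGroup.eq]
        exact hR _
      exact ⟨⟨QuotientGroup.mk g, ⟨_, hmem⟩⟩, by group⟩
  refine ⟨?_, ?_, ?_⟩
  · -- (a) norm maps Δ(X_K) into Δ(X)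
    intro x hx _
    let N : (Fin 7 → ℤ) →+ (Fin 7 → ℤ) := ∑ c : G ⧸ H, (Multiplicative.toAdd (ρ (R c))).toAddMonoidHom
    have hN : ∀ y, N y = ∑ c : G ⧸ H, ρ (R c) y := by
      intro y
      simp only [N, AddMonoidHom.finset_sum_apply]
      rfl
    rw [← hN]
    have hle : Delta ρH ≤ (Delta ρ).comap N := by
      rw [Delta, AddSubgroup.closure_le]
      rintro y ⟨l, hl, rfl⟩
      simp only [SetLike.mem_coe, AddSubgroup.mem_comap]
      -- N (normOrbit ρH l) = n • normOrbit ρ l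
      set kH : ℕ := (univ.filter fun h : H => ρH h l = l).card with hkH
      set kG : ℕ := (univ.filter fun g : G => ρ g l = l).card with hkG
      have hdvd : kH ∣ kG := by
        rw [hkH, hkG, stab_card_eq, stab_card_eq]
        have : stab ρH l = (stab ρ l).comap H.subtype := rfl
        rw [this]
        exact Subgroup.card_comap_dvd_of_injective (stab ρ l) H.subtype H.subtype_injective
      obtain ⟨n, hn⟩ := hdvd
      have hkey : kH • N (normOrbit ρH l) = kH • (n • normOrbit ρ l) := by
        rw [← map_nsmul, ← sum_all_eq ρH l]
        have h1 : N (∑ h : H, ρH h l) = ∑ c : G ⧸ H, ∑ h : H, ρ (R c * (h : G)) l := by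
          rw [hN, Finset.sum_congr rfl]
          intro c _
          rw [map_sum, Finset.sum_congr rfl]
          intro h _
          rw [rho_mul]
          rfl
        have h2 : ∑ p : (G ⧸ H) × H, ρ (R p.1 * (p.2 : G)) l = ∑ g : G, ρ g l :=
          Fintype.sum_bijective _ hbij _ _ (fun p => rfl)
        rw [h1, ← Fintype.sum_prod_type', h2, sum_all_eq ρ l, ← hkG, hn, mul_smul]
      have hne : kH ≠ 0 := by
        rw [hkH]
        refine Finset.card_ne_zero_of_mem (Finset.mem_filter.mpr ⟨mem_univ 1, ?_⟩)
        rw [map_one]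
        rfl
      have heq := cancel_nsmul kH _ _ hne hkey
      rw [heq]
      refine AddSubgroup.nsmul_mem _ (AddSubgroup.subset_closure ?_) n
      exact ⟨l, hl, rfl⟩
    exact hle hx
  · -- (b) restriction maps Δ(X) into Δ(X_K)
    intro x hx
    refine (AddSubgroup.closure_le _).mpr ?_ hx
    rintro y ⟨l, hl, rfl⟩
    have h := sum_invariant_mem (G := H) ρH (Finset.image (fun g : G => ρ g l) univ)
      (fun m hm => by
        obtain ⟨g, -, rfl⟩ := Finset.mem_image.mp hm
        exact hlines g l hl)
      (fun h m hm => by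
        obtain ⟨g, -, rfl⟩ := Finset.mem_image.mp hm
        exact Finset.mem_image.mpr ⟨(h : G) * g, mem_univ _, rho_mul ρ h g l⟩)
    exact h
  · -- (c) Norm ∘ Res is multiplication by the index on fixed classes
    intro x hx
    have hx' : ∀ g : G, ρ g x = x := hx
    rw [Finset.sum_congr rfl (fun c _ => hx' (R c)), Finset.sum_const, Finset.card_univ]
    congr 1
    rw [Subgroup.index, Nat.card_eq_fintype_card]
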